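/- The odd writhe polynomial f_K(t) = Σ_{c odd} w(c) t^{N(c)} is invariant under the Gauss-diagram Reidemeister move Ω1 (adding or removing an isolated chord that interlinks no other chord). -/

import Mathlib

open Finset LaurentPolynomial

/-- A signed, oriented chord diagram (combinatorial Gauss diagram) with `n` chords:
the `2*n` chord endpoints on the circle are the elements of `Fin (2*n)` in (positive)
cyclic order; chord `i` has over endpoint `c⁺ = ep (i, true)`, under endpoint
`c⁻ = ep (i, false)` and a sign (writhe) `sign i ∈ {1, -1}`. -/
structure ChordDiagram (n : ℕ) where
  ep : Fin n × Bool ≃ Fin (2 * n)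
  sign : Fin n → ℤ
  sign_unit : ∀ i, sign i = 1 ∨ sign i = -1

namespace ChordDiagram

variable {n : ℕ}

/-- the over endpoint `c⁺` of a chord -/
def overEnd (D : ChordDiagram n) (i : Fin n) : Fin (2 * n) := D.ep (i, true)

/-- the under endpoint `c⁻` of a chord -/
def under (D : ChordDiagram n) (i : Fin n) : Fin (2 * n) := D.ep (i, false)

/-- the number of steps from `b` to `x`, travelling in the positive direction
around the circle -/
def relpos (b x : Fin (2 * n)) : ℕ := (x.val + 2 * n - b.val) % (2 * n)

/-- `x` lies strictly between the endpoints of chord `i`, on the side swept out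
going from `c⁺` to `c⁻` in the positive direction -/
def StrictlyBetween (D : ChordDiagram n) (i : Fin n) (x : Fin (2 * n)) : Prop :=
  0 < relpos (D.overEnd i) x ∧ relpos (D.overEnd i) x < relpos (D.overEnd i) (D.under i)

instance (D : ChordDiagram n) (i : Fin n) (x : Fin (2 * n)) :
    Decidable (D.StrictlyBetween i x) := inferInstanceAs (Decidable (_ ∧ _))

/-- two distinct chords interlink if their endpoints alternate around the circle,
i.e. exactly one endpoint of `j` lies strictly between the endpoints of `i` -/
def Interlinks (D : ChordDiagram n) (i j : Fin n) : Prop :=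
  i ≠ j ∧ Xor (D.StrictlyBetween i (D.overEnd j)) (D.StrictlyBetween i (D.under j))

instance (D : ChordDiagram n) (i j : Fin n) : Decidable (D.Interlinks i j) :=
  inferInstanceAs (Decidable (_ ∧ _))

/-- the number of chords interlinking chord `i` -/
def interlinkCount (D : ChordDiagram n) (i : Fin n) : ℕ :=
  (univ.filter fun j => D.Interlinks i j).card

/-- the number of chord endpoints lying (strictly) on one side of chord `i` -/
def sideCount (D : ChordDiagram n) (i : Fin n) : ℕ :=
  (univ.filter fun x => D.StrictlyBetween i x).card

/-- a chord is odd if it interlinks an odd number of other chords -/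
def OddChord (D : ChordDiagram n) (i : Fin n) : Prop := Odd (D.interlinkCount i)

instance (D : ChordDiagram n) (i : Fin n) : Decidable (D.OddChord i) :=
  inferInstanceAs (Decidable (Odd _))

/-- The label `N(a)` of the arc whose terminal point is `a`: the sum of the signs of
all chords whose over endpoint is met strictly before their under endpoint when
traversing the circle once in the positive direction starting inside this arc. -/
def arcLabel (D : ChordDiagram n) (a : Fin (2 * n)) : ℤ :=
  ∑ i ∈ univ.filter fun i => relpos a (D.overEnd i) < relpos a (D.under i), D.sign i

/-- The value `N(c)` of a chord: for a positive chord, the difference `x - y` of the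
arc labels just before `c⁺` and just before `c⁻`; for a negative chord, the difference
`z - w` of the arc labels just after `c⁺` and just after `c⁻` (the label just after an
over endpoint is the label just before it minus the sign, and the label just after an
under endpoint is the label just before it plus the sign). -/
def chordVal (D : ChordDiagram n) (i : Fin n) : ℤ :=
  if D.sign i = 1 then D.arcLabel (D.overEnd i) - D.arcLabel (D.under i)
  else (D.arcLabel (D.overEnd i) - D.sign i) - (D.arcLabel (D.under i) + D.sign i)

/-- the odd writhe `J(K) = Σ_{c odd} w(c)` -/
def oddWrithe (D : ChordDiagram n) : ℤ :=
  ∑ i ∈ univ.filter fun i => D.OddChord i, D.sign i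

/-- the odd writhe polynomial `f_K(t) = Σ_{c odd} w(c) · t^{N(c)} ∈ ℤ[t,t⁻¹]` -/
noncomputable def owp (D : ChordDiagram n) : LaurentPolynomial ℤ :=
  ∑ i ∈ univ.filter fun i => D.OddChord i, C (D.sign i) * T (D.chordVal i)

/-- evaluation of the odd writhe polynomial at a rational number `x`:
`Σ_{c odd} w(c) · x^{N(c)}` -/
def owpEval (D : ChordDiagram n) (x : ℚ) : ℚ :=
  ∑ i ∈ univ.filter fun i => D.OddChord i, (D.sign i : ℚ) * x ^ D.chordVal i

/-- the coefficient of `t^k` in a Laurent polynomial -/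
def coeffOf (f : LaurentPolynomial ℤ) (k : ℤ) : ℤ := (AddMonoidAlgebra.coeff f : ℤ →₀ ℤ) k

/-- the degree `Deg f = max { |i| : coefficient of tⁱ in f is nonzero }` -/
def owpDeg (f : LaurentPolynomial ℤ) : ℕ := (AddMonoidAlgebra.coeff f : ℤ →₀ ℤ).support.sup fun k => k.natAbs

/-- reversing the orientation of the knot: the cyclic order of the endpoints is
reversed, while signs and over/under data of the crossings are preserved -/
def reverse (D : ChordDiagram n) : ChordDiagram n where
  ep := D.ep.trans Fin.revPerm
  sign := D.sign
  sign_unit := D.sign_unit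

/-- the mirror image: every crossing is switched, so every chord's over and under
endpoints are exchanged and its sign is negated -/
def mirror (D : ChordDiagram n) : ChordDiagram n where
  ep := (Equiv.prodCongr (Equiv.refl (Fin n))
      ⟨fun b => !b, fun b => !b, Bool.not_not, Bool.not_not⟩).trans D.ep
  sign := fun i => -D.sign i
  sign_unit := fun i => (D.sign_unit i).elim
    (fun h => Or.inr (show -D.sign i = -1 by rw [h]))
    (fun h => Or.inl (show -D.sign i = 1 by rw [h]; ring))

/-! ### Planarity via the Euler characteristic of the carrier surface

The diagram determines a 4-valent graph (vertices = chords, edges = the `2*n` arcs of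
the circle) together with a rotation system at each vertex, coming from the structure
of a transversal crossing: for a positive crossing the counterclockwise order of the
four ends is (over-out, under-out, over-in, under-in), for a negative crossing it is
(over-out, under-in, over-in, under-out).  The diagram is realizable by a classical
(planar) knot diagram iff the resulting closed oriented carrier surface is a sphere,
i.e. iff `V - E + F = n - 2n + F = 2`.

Darts are encoded as pairs `(p, io) : Fin (2*n) × Bool`, meaning the end of an arc
at the vertex through the circle point `p`, with `io = true` for the outgoing arc
(from `p` to `p+1`) and `io = false` for the incoming arc (from `p-1` to `p`). -/

/-- the other endpoint of the chord through a given endpoint -/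
def otherEnd (D : ChordDiagram n) (p : Fin (2 * n)) : Fin (2 * n) :=
  D.ep ((D.ep.symm p).1, !(D.ep.symm p).2)

lemma otherEnd_otherEnd (D : ChordDiagram n) (p : Fin (2 * n)) :
    D.otherEnd (D.otherEnd p) = p := by
  simp [otherEnd]

/-- whether the rotation at the vertex toggles the in/out marker when passing from
the end at `p` to the end at the other endpoint of its chord -/
def tog (D : ChordDiagram n) (p : Fin (2 * n)) : Bool :=
  if D.sign (D.ep.symm p).1 = 1 then !(D.ep.symm p).2 else (D.ep.symm p).2

/-- the vertex rotation permutation on darts -/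
def vertexPerm (D : ChordDiagram n) : Equiv.Perm (Fin (2 * n) × Bool) :=
  Equiv.trans
    ⟨fun x => (x.1, xor x.2 (D.tog x.1)), fun x => (x.1, xor x.2 (D.tog x.1)),
      fun x => by simp [Bool.xor_assoc], fun x => by simp [Bool.xor_assoc]⟩
    ⟨fun x => (D.otherEnd x.1, x.2), fun x => (D.otherEnd x.1, x.2),
      fun x => by simp [otherEnd_otherEnd], fun x => by simp [otherEnd_otherEnd]⟩

/-- the edge involution on darts, matching the two ends of each arc -/
def arcPerm (D : ChordDiagram n) : Equiv.Perm (Fin (2 * n) × Bool) :=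
  ⟨fun x => if x.2 then (finRotate (2 * n) x.1, false) else ((finRotate (2 * n)).symm x.1, true),
   fun x => if x.2 then (finRotate (2 * n) x.1, false) else ((finRotate (2 * n)).symm x.1, true),
   fun x => by rcases x with ⟨p, _ | _⟩ <;> simp only [Bool.false_eq_true, ite_false, ite_true, Equiv.apply_symm_apply, Equiv.symm_apply_apply],
   fun x => by rcases x with ⟨p, _ | _⟩ <;> simp only [Bool.false_eq_true, ite_false, ite_true, Equiv.apply_symm_apply, Equiv.symm_apply_apply]⟩

/-- the face permutation on darts -/
def facePerm (D : ChordDiagram n) : Equiv.Perm (Fin (2 * n) × Bool) :=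
  (D.arcPerm).trans D.vertexPerm

/-- the number of faces: the number of orbits of the face permutation -/
noncomputable def faceCount (D : ChordDiagram n) : ℕ :=
  Nat.card (MulAction.orbitRel.Quotient (Subgroup.zpowers D.facePerm) (Fin (2 * n) × Bool))

/-- the chord diagram arises from a classical (planar) knot diagram: the carrier
surface has Euler characteristic `V - E + F = n - 2n + faceCount = 2` -/
def PlanarRealizable (D : ChordDiagram n) : Prop := D.faceCount = n + 2

end ChordDiagram



namespace ChordDiagram

lemma relpos_eq {n : ℕ} (b x : Fin (2 * n)) :
    relpos b x = if b.val ≤ x.val then x.val - b.val else x.val + 2 * n - b.val := by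
  have hb := b.isLt; have hx := x.isLt
  unfold relpos
  split_ifs with h
  · have h2 : x.val + 2 * n - b.val = (x.val - b.val) + 1 * (2 * n) := by omega
    rw [h2, Nat.add_mul_mod_self_right, Nat.mod_eq_of_lt (by omega)]
  · rw [Nat.mod_eq_of_lt (by omega)]

lemma relpos_lt_iff {n : ℕ} (b x y : Fin (2 * n)) :
    relpos b x < relpos b y ↔
      ((b.val ≤ x.val ∧ b.val ≤ y.val ∧ x.val < y.val) ∨ (b.val ≤ x.val ∧ y.val < b.val) ∨
        (x.val < b.val ∧ y.val < b.val ∧ x.val < y.val)) := by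
  have hb := b.isLt; have hx := x.isLt; have hy := y.isLt
  rw [relpos_eq, relpos_eq]; split_ifs <;> omega

lemma relpos_pos_iff {n : ℕ} (b x : Fin (2 * n)) : 0 < relpos b x ↔ x.val ≠ b.val := by
  have hb := b.isLt; have hx := x.isLt
  rw [relpos_eq]; split_ifs <;> omega

/-- auxiliary arithmetic form of `StrictlyBetween` -/
def Pnat (a b x : ℕ) : Prop :=
  x ≠ a ∧ ((a ≤ x ∧ a ≤ b ∧ x < b) ∨ (a ≤ x ∧ b < a) ∨ (x < a ∧ b < a ∧ x < b))

lemma sb_iff {n : ℕ} (D : ChordDiagram n) (i : Fin n) (x : Fin (2 * n)) :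
    D.StrictlyBetween i x ↔ Pnat (D.overEnd i).val (D.under i).val x.val := by
  unfold StrictlyBetween Pnat
  rw [relpos_pos_iff, relpos_lt_iff]

lemma endpoints_ne {n : ℕ} (D : ChordDiagram n) {p q : Fin n × Bool} (h : p ≠ q) :
    (D.ep p).val ≠ (D.ep q).val := by
  intro hv
  exact h (D.ep.injective (Fin.val_injective hv))

lemma interlinks_symm {n : ℕ} (D : ChordDiagram n) (i j : Fin n)
    (h : D.Interlinks i j) : D.Interlinks j i := by
  obtain ⟨hne, hx⟩ := h
  refine ⟨hne.symm, ?_⟩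
  rw [sb_iff, sb_iff] at hx
  rw [sb_iff, sb_iff]
  have hab : (D.overEnd i).val ≠ (D.under i).val := endpoints_ne D (by simp)
  have hcd : (D.overEnd j).val ≠ (D.under j).val := endpoints_ne D (by simp)
  have h1 : (D.overEnd i).val ≠ (D.overEnd j).val := endpoints_ne D (by simp [hne])
  have h2 : (D.overEnd i).val ≠ (D.under j).val := endpoints_ne D (by simp [hne])
  have h3 : (D.under i).val ≠ (D.overEnd j).val := endpoints_ne D (by simp [hne])
  have h4 : (D.under i).val ≠ (D.under j).val := endpoints_ne D (by simp [hne])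
  unfold Pnat Xor at hx ⊢
  omega

end ChordDiagram


open ChordDiagram

/-- the odd writhe polynomial is invariant under the Gauss-diagram
Reidemeister move Ω1: removing an isolated chord `i₀` (one interlinking no other
chord) from `D'` yields `D` (via the strictly monotone relabelling `φ` of the
remaining endpoints) and the polynomial is unchanged. -/
theorem stmt_5 {n : ℕ} (D : ChordDiagram n) (D' : ChordDiagram (n + 1))
    (i₀ : Fin (n + 1)) (φ : Fin (2 * n) → Fin (2 * (n + 1))) (hφ : StrictMono φ)
    (hep : ∀ (j : Fin n) (b : Bool), D'.ep (i₀.succAbove j, b) = φ (D.ep (j, b)))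
    (hsign : ∀ j : Fin n, D'.sign (i₀.succAbove j) = D.sign j)
    (hiso : ∀ j : Fin (n + 1), j ≠ i₀ → ¬ D'.Interlinks i₀ j) :
    D'.owp = D.owp := by
  -- endpoint correspondence
  have hov : ∀ j : Fin n, D'.overEnd (i₀.succAbove j) = φ (D.overEnd j) := fun j => hep j true
  have hun : ∀ j : Fin n, D'.under (i₀.succAbove j) = φ (D.under j) := fun j => hep j false
  -- φ preserves order
  have hle : ∀ u v : Fin (2 * n), (φ u).val ≤ (φ v).val ↔ u.val ≤ v.val := by
    intro u v
    constructor
    · intro h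
      by_contra hc
      push_neg at hc
      have := hφ (show v < u from hc)
      omega
    · intro h
      rcases Nat.eq_or_lt_of_le h with h' | h'
      · rw [Fin.val_injective h']
      · exact le_of_lt (hφ h')
  -- φ preserves relpos comparisons
  have hrel : ∀ b x y : Fin (2 * n),
      (relpos (φ b) (φ x) < relpos (φ b) (φ y)) ↔ relpos b x < relpos b y := by
    intro b x y
    rw [relpos_lt_iff, relpos_lt_iff]
    have e1 := hle b x
    have e2 := hle x b
    have e3 := hle b y
    have e4 := hle y b
    have e5 := hle x y
    have e6 := hle y x
    omega
  -- φ preserves StrictlyBetween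
  have hsb : ∀ (j : Fin n) (x : Fin (2 * n)),
      D'.StrictlyBetween (i₀.succAbove j) (φ x) ↔ D.StrictlyBetween j x := by
    intro j x
    unfold StrictlyBetween
    rw [hov j, hun j, relpos_pos_iff, relpos_pos_iff, hrel]
    have e1 := hle (D.overEnd j) x
    have e2 := hle x (D.overEnd j)
    constructor <;> rintro ⟨h1, h2⟩ <;> exact ⟨by omega, h2⟩
  -- φ preserves Interlinks
  have hil : ∀ j k : Fin n,
      D'.Interlinks (i₀.succAbove j) (i₀.succAbove k) ↔ D.Interlinks j k := by
    intro j k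
    unfold Interlinks
    rw [hov k, hun k, hsb j, hsb j]
    have : i₀.succAbove j ≠ i₀.succAbove k ↔ j ≠ k :=
      Fin.succAbove_right_injective.ne_iff
    rw [this]
  -- chord i₀ is not odd
  have hcount0 : D'.interlinkCount i₀ = 0 := by
    unfold interlinkCount
    rw [Finset.card_eq_zero, Finset.filter_eq_empty_iff]
    intro j _
    by_cases h : j = i₀
    · subst h; intro hc; exact hc.1 rfl
    · exact hiso j h
  have hnotodd : ¬ D'.OddChord i₀ := by
    unfold OddChord
    rw [hcount0]
    simp
  -- i₀ does not interlink the other chords, in either order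
  have hno : ∀ j : Fin n, ¬ D'.Interlinks (i₀.succAbove j) i₀ := fun j h =>
    hiso _ (Fin.succAbove_ne i₀ j) (interlinks_symm D' _ _ h)
  -- interlink counts match
  have hcnt : ∀ j : Fin n, D'.interlinkCount (i₀.succAbove j) = D.interlinkCount j := by
    intro j
    unfold interlinkCount
    rw [Finset.card_filter, Finset.card_filter,
      Fin.sum_univ_succAbove (fun k => if D'.Interlinks (i₀.succAbove j) k then 1 else 0) i₀,
      if_neg (hno j), zero_add]
    exact Finset.sum_congr rfl fun k _ => if_congr (hil j k) rfl rfl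
  have hodd : ∀ j : Fin n, (D'.OddChord (i₀.succAbove j) ↔ D.OddChord j) := by
    intro j
    unfold OddChord
    rw [hcnt j]
  -- arc labels
  have harc : ∀ a : Fin (2 * n), D'.arcLabel (φ a) =
      (if relpos (φ a) (D'.overEnd i₀) < relpos (φ a) (D'.under i₀) then D'.sign i₀ else 0)
        + D.arcLabel a := by
    intro a
    unfold arcLabel
    rw [Finset.sum_filter, Finset.sum_filter,
      Fin.sum_univ_succAbove
        (fun i => if relpos (φ a) (D'.overEnd i) < relpos (φ a) (D'.under i) then D'.sign i else 0) i₀]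
    congr 1
    refine Finset.sum_congr rfl fun j _ => ?_
    rw [hov j, hun j, hsign j]
    exact if_congr (hrel a (D.overEnd j) (D.under j)) rfl rfl
  -- isolated chord contributes equally at both endpoints of any other chord
  have heps : ∀ j : Fin n,
      ((relpos (φ (D.overEnd j)) (D'.overEnd i₀) < relpos (φ (D.overEnd j)) (D'.under i₀)) ↔
        (relpos (φ (D.under j)) (D'.overEnd i₀) < relpos (φ (D.under j)) (D'.under i₀))) := by
    intro j
    have hnij : ¬ D'.Interlinks i₀ (i₀.succAbove j) := hiso _ (Fin.succAbove_ne i₀ j)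
    have hne' : i₀ ≠ i₀.succAbove j := (Fin.succAbove_ne i₀ j).symm
    have hxor : D'.StrictlyBetween i₀ (D'.overEnd (i₀.succAbove j)) ↔
        D'.StrictlyBetween i₀ (D'.under (i₀.succAbove j)) := by
      constructor <;> intro h <;> by_contra hc
      · exact hnij ⟨hne', Or.inl ⟨h, hc⟩⟩
      · exact hnij ⟨hne', Or.inr ⟨h, hc⟩⟩
    rw [sb_iff, sb_iff] at hxor
    rw [← hov j, ← hun j, relpos_lt_iff, relpos_lt_iff]
    have hab : (D'.overEnd i₀).val ≠ (D'.under i₀).val := endpoints_ne D' (by simp)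
    have h1 : (D'.overEnd (i₀.succAbove j)).val ≠ (D'.overEnd i₀).val :=
      endpoints_ne D' (by simp [Fin.succAbove_ne])
    have h2 : (D'.overEnd (i₀.succAbove j)).val ≠ (D'.under i₀).val :=
      endpoints_ne D' (by simp [Fin.succAbove_ne])
    have h3 : (D'.under (i₀.succAbove j)).val ≠ (D'.overEnd i₀).val :=
      endpoints_ne D' (by simp [Fin.succAbove_ne])
    have h4 : (D'.under (i₀.succAbove j)).val ≠ (D'.under i₀).val :=
      endpoints_ne D' (by simp [Fin.succAbove_ne])
    unfold Pnat at hxor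
    omega
  -- chord values match
  have hcv : ∀ j : Fin n, D'.chordVal (i₀.succAbove j) = D.chordVal j := by
    intro j
    unfold chordVal
    rw [hsign j, hov j, hun j, harc (D.overEnd j), harc (D.under j)]
    have hee :
        (if relpos (φ (D.overEnd j)) (D'.overEnd i₀) < relpos (φ (D.overEnd j)) (D'.under i₀)
          then D'.sign i₀ else 0) =
        (if relpos (φ (D.under j)) (D'.overEnd i₀) < relpos (φ (D.under j)) (D'.under i₀)
          then D'.sign i₀ else 0) := if_congr (heps j) rfl rfl
    rw [hee]
    split_ifs <;> ring
  -- conclude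
  unfold owp
  rw [Finset.sum_filter, Finset.sum_filter,
    Fin.sum_univ_succAbove
      (fun i => if D'.OddChord i then C (D'.sign i) * T (D'.chordVal i) else 0) i₀,
    if_neg hnotodd, zero_add]
  refine Finset.sum_congr rfl fun j _ => ?_
  rw [hsign j, hcv j]
  exact if_congr (hodd j) rfl rfl
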